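/- arXiv:1311.6250 — 2 statements merged into one kernel-verified Lean document; each statement's English description precedes it below -/
import Mathlib

section
/- TPTL¹ is strictly more expressive than MTL over data words: every MTL formula is equivalent to a TPTL formula using one register variable, but some TPTL¹ formula (for instance x.F F F (x = 0)) is not equivalent to any MTL formula. -/
/-- Integers extended with `-∞` (`⊥`) and `+∞` (`⊤`), used as interval endpoints. -/
abbrev EIntv := WithBot (WithTop ℤ)

def EIntv.ofInt (n : ℤ) : EIntv := ((n : WithTop ℤ) : EIntv)

/-- An interval of integers, given by two (possibly infinite) endpoints and
openness flags. -/
structure Iv where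
  lo : EIntv
  hi : EIntv
  loOpen : Bool
  hiOpen : Bool

/-- Membership of an integer in an interval. -/
def Iv.mem (I : Iv) (d : ℤ) : Prop :=
  (if I.loOpen then I.lo < EIntv.ofInt d else I.lo ≤ EIntv.ofInt d) ∧
  (if I.hiOpen then EIntv.ofInt d < I.hi else EIntv.ofInt d ≤ I.hi)

/-- The interval `(-∞, +∞)`. -/
def Iv.univ : Iv := ⟨⊥, ⊤, true, true⟩

/-- The singleton interval `[n, n]`. -/
def Iv.pt (n : ℤ) : Iv := ⟨EIntv.ofInt n, EIntv.ofInt n, false, false⟩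

/-- A data word: an infinite sequence of pairs of a set of propositions and a
natural number data value. -/
abbrev DataWord (P : Type) := ℕ → (Set P) × ℕ

/-- Syntax of MTL: atoms, negation, conjunction, and interval-constrained
strict until. -/
inductive MTL (P : Type) where
  | atom : P → MTL P
  | neg  : MTL P → MTL P
  | and  : MTL P → MTL P → MTL P
  | untl : MTL P → Iv → MTL P → MTL P

/-- Satisfaction of an MTL formula at position `i` of data word `w`. -/
def MTL.sat {P : Type} (w : DataWord P) : ℕ → MTL P → Prop
  | i, .atom p => p ∈ (w i).1
  | i, .neg φ => ¬ MTL.sat w i φ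
  | i, .and φ ψ => MTL.sat w i φ ∧ MTL.sat w i ψ
  | i, .untl φ I ψ => ∃ j, i < j ∧ MTL.sat w j ψ ∧
      I.mem (((w j).2 : ℤ) - ((w i).2 : ℤ)) ∧
      ∀ k, i < k → k < j → MTL.sat w k φ

/-- A data word satisfies an MTL formula if it holds at position `0`. -/
def MTL.models {P : Type} (w : DataWord P) (φ : MTL P) : Prop := MTL.sat w 0 φ

/-- The until rank of an MTL formula. -/
def MTL.urk {P : Type} : MTL P → ℕ
  | .atom _ => 0
  | .neg φ => φ.urk
  | .and φ ψ => max φ.urk ψ.urk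
  | .untl φ _ ψ => max φ.urk ψ.urk + 1

/-- All interval endpoints of until operators in the formula lie in `S`. -/
def MTL.endpointsIn {P : Type} : MTL P → Set EIntv → Prop
  | .atom _, _ => True
  | .neg φ, S => φ.endpointsIn S
  | .and φ ψ, S => φ.endpointsIn S ∧ ψ.endpointsIn S
  | .untl φ I ψ, S => I.lo ∈ S ∧ I.hi ∈ S ∧ φ.endpointsIn S ∧ ψ.endpointsIn S

/-- Syntax of TPTL: atoms, register constraints, negation, conjunction,
strict until, and the freeze quantifier. -/
inductive TPTL (P V : Type) where
  | atom : P → TPTL P V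
  | cstr : V → Iv → TPTL P V
  | neg : TPTL P V → TPTL P V
  | and : TPTL P V → TPTL P V → TPTL P V
  | untl : TPTL P V → TPTL P V → TPTL P V
  | freeze : V → TPTL P V → TPTL P V

/-- Satisfaction of a TPTL formula at position `i` of data word `w` under the
register valuation `ν`. -/
def TPTL.sat {P V : Type} [DecidableEq V] (w : DataWord P) :
    ℕ → (V → ℕ) → TPTL P V → Prop
  | i, _, .atom p => p ∈ (w i).1
  | i, ν, .cstr x I => I.mem (((w i).2 : ℤ) - (ν x : ℤ))
  | i, ν, .neg φ => ¬ TPTL.sat w i ν φ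
  | i, ν, .and φ ψ => TPTL.sat w i ν φ ∧ TPTL.sat w i ν ψ
  | i, ν, .untl φ ψ => ∃ j, i < j ∧ TPTL.sat w j ν ψ ∧
      ∀ k, i < k → k < j → TPTL.sat w k ν φ
  | i, ν, .freeze x φ => TPTL.sat w i (Function.update ν x (w i).2) φ

/-- A data word satisfies a TPTL formula if it holds at position `0` under the
valuation mapping every register to the first data value. -/
def TPTL.models {P V : Type} [DecidableEq V] (w : DataWord P) (φ : TPTL P V) : Prop :=
  TPTL.sat w 0 (fun _ => (w 0).2) φ

/-- The until rank of a TPTL formula. -/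
def TPTL.urk {P V : Type} : TPTL P V → ℕ
  | .atom _ => 0
  | .cstr _ _ => 0
  | .neg φ => φ.urk
  | .and φ ψ => max φ.urk ψ.urk
  | .untl φ ψ => max φ.urk ψ.urk + 1
  | .freeze _ φ => φ.urk

/-- All register constraints in the formula are equality tests `x ∈ [0,0]`. -/
def TPTL.eqOnly {P V : Type} : TPTL P V → Prop
  | .atom _ => True
  | .cstr _ I => I = Iv.pt 0
  | .neg φ => φ.eqOnly
  | .and φ ψ => φ.eqOnly ∧ ψ.eqOnly
  | .untl φ ψ => φ.eqOnly ∧ ψ.eqOnly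
  | .freeze _ φ => φ.eqOnly

/-- All endpoints of intervals in register constraints lie in `S`. -/
def TPTL.cstrIn {P V : Type} : TPTL P V → Set EIntv → Prop
  | .atom _, _ => True
  | .cstr _ I, S => I.lo ∈ S ∧ I.hi ∈ S
  | .neg φ, S => φ.cstrIn S
  | .and φ ψ, S => φ.cstrIn S ∧ ψ.cstrIn S
  | .untl φ ψ, S => φ.cstrIn S ∧ ψ.cstrIn S
  | .freeze _ φ, S => φ.cstrIn S

/-! ### Auxiliary development -/

/-- Magnitude of a finite endpoint (0 for `⊥`/`⊤`). -/
def eMag (e : EIntv) : ℕ := (WithTop.untopD 0 (WithBot.unbotD 0 e)).natAbs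

lemma eMag_bot : eMag (⊥ : EIntv) = 0 := rfl
lemma eMag_top : eMag ((⊤ : WithTop ℤ) : EIntv) = 0 := rfl
lemma eMag_coe (m : ℤ) : eMag ((m : WithTop ℤ) : EIntv) = m.natAbs := rfl

lemma cmp_congr (e : EIntv) (M : ℕ) (hm : eMag e ≤ M) (a b : ℤ)
    (hab : ((M:ℤ) < a ∧ (M:ℤ) < b) ∨ (a < -(M:ℤ) ∧ b < -(M:ℤ))) :
    ((e < EIntv.ofInt a ↔ e < EIntv.ofInt b) ∧ (e ≤ EIntv.ofInt a ↔ e ≤ EIntv.ofInt b)) ∧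
    ((EIntv.ofInt a < e ↔ EIntv.ofInt b < e) ∧ (EIntv.ofInt a ≤ e ↔ EIntv.ofInt b ≤ e)) := by
  induction e using WithBot.recBotCoe with
  | bot => simp [EIntv.ofInt]
  | coe t =>
    induction t using WithTop.recTopCoe with
    | top =>
      have h1 : ∀ c : ℤ, EIntv.ofInt c < ((⊤ : WithTop ℤ) : EIntv) := fun c =>
        WithBot.coe_lt_coe.mpr (WithTop.coe_lt_top c)
      have h2 : ∀ c : ℤ, ¬ (((⊤ : WithTop ℤ) : EIntv) < EIntv.ofInt c) := fun c hc =>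
        absurd (WithBot.coe_lt_coe.mp hc) (WithTop.not_top_lt _)
      exact ⟨⟨iff_of_false (h2 a) (h2 b),
              iff_of_false (not_le.mpr (h1 a)) (not_le.mpr (h1 b))⟩,
             ⟨iff_of_true (h1 a) (h1 b), iff_of_true (h1 a).le (h1 b).le⟩⟩
    | coe m =>
      rw [eMag_coe] at hm
      simp only [EIntv.ofInt, WithBot.coe_lt_coe, WithTop.coe_lt_coe,
        WithBot.coe_le_coe, WithTop.coe_le_coe]
      omega

lemma Iv.mem_congr (I : Iv) (M : ℕ) (hlo : eMag I.lo ≤ M) (hhi : eMag I.hi ≤ M)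
    {a b : ℤ} (hab : a = b ∨ ((M:ℤ) < a ∧ (M:ℤ) < b) ∨ (a < -(M:ℤ) ∧ b < -(M:ℤ))) :
    I.mem a ↔ I.mem b := by
  rcases hab with rfl | hab
  · exact Iff.rfl
  · obtain ⟨⟨l1, l2⟩, -⟩ := cmp_congr I.lo M hlo a b hab
    obtain ⟨-, ⟨h1, h2⟩⟩ := cmp_congr I.hi M hhi a b hab
    unfold Iv.mem
    cases I.loOpen <;> cases I.hiOpen <;> simp_all
/-! ### Interval endpoint bound of an MTL formula -/

def MTL.bound {P : Type} : MTL P → ℕ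
  | .atom _ => 0
  | .neg φ => φ.bound
  | .and φ ψ => max φ.bound ψ.bound
  | .untl φ I ψ => max (max φ.bound ψ.bound) (max (eMag I.lo) (eMag I.hi))

/-! ### The two witnessing data words -/

def uval (H k : ℕ) : ℕ := if k = 0 then 3*H else k*H
def vval (H k : ℕ) : ℕ := if k = 0 then 3*H else if k = 1 then H else (k+1)*H

def uw (P : Type) (H : ℕ) : DataWord P := fun k => (∅, uval H k)
def vw (P : Type) (H : ℕ) : DataWord P := fun k => (∅, vval H k)

lemma uw_snd (P : Type) (H k : ℕ) : ((uw P H k).2 : ℤ) = (uval H k : ℤ) := rfl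
lemma vw_snd (P : Type) (H k : ℕ) : ((vw P H k).2 : ℤ) = (vval H k : ℤ) := rfl

lemma uval0 (H : ℕ) : uval H 0 = 3*H := rfl
lemma vval0 (H : ℕ) : vval H 0 = 3*H := rfl
lemma vval1 (H : ℕ) : vval H 1 = H := rfl
lemma uval_eq (H k : ℕ) (hk : k ≠ 0) : uval H k = k*H := if_neg hk
lemma vval_eq (H k : ℕ) (hk : 2 ≤ k) : vval H k = (k+1)*H := by
  unfold vval
  rw [if_neg (by omega), if_neg (by omega)]

lemma mul_gap {a b : ℕ} (M : ℕ) (h : a < b) : a*(M+1) + M < b*(M+1) := by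
  have h1 : a*(M+1) + (M+1) = (a+1)*(M+1) := (Nat.succ_mul a (M+1)).symm
  have h2 : (a+1)*(M+1) ≤ b*(M+1) := Nat.mul_le_mul_right _ h
  omega

/-! ### The key indistinguishability lemma -/

lemma main_sat {P : Type} (M : ℕ) : ∀ φ : MTL P, φ.bound ≤ M →
    ∀ i i', ((i = 0 ∧ i' = 0) ∨ (1 ≤ i ∧ 1 ≤ i')) →
      (MTL.sat (uw P (M+1)) i φ ↔ MTL.sat (vw P (M+1)) i' φ) := by
  intro φ
  induction φ with
  | atom p => intro _ i i' _; simp [MTL.sat, uw, vw]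
  | neg φ ih =>
    intro hb i i' hz
    have := ih (by simpa [MTL.bound] using hb) i i' hz
    simp [MTL.sat, this]
  | and φ ψ ih1 ih2 =>
    intro hb i i' hz
    simp only [MTL.bound, max_le_iff] at hb
    simp [MTL.sat, ih1 hb.1 i i' hz, ih2 hb.2 i i' hz]
  | untl φ₁ I φ₂ ih1 ih2 =>
    intro hb i i' hz
    simp only [MTL.bound, max_le_iff] at hb
    obtain ⟨⟨hb1, hb2⟩, hlo, hhi⟩ := hb
    have IH1 := ih1 hb1
    have IH2 := ih2 hb2
    have memc : ∀ {a b : ℤ},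
        (a = b ∨ ((M:ℤ) < a ∧ (M:ℤ) < b) ∨ (a < -(M:ℤ) ∧ b < -(M:ℤ))) →
        (I.mem a ↔ I.mem b) := fun h => Iv.mem_congr I M hlo hhi h
    simp only [MTL.sat, uw_snd, vw_snd]
    constructor
    · rintro ⟨j, hij, h2, hmem, hbtw⟩
      rcases hz with ⟨rfl, rfl⟩ | ⟨hi, hi'⟩
      · rcases (show j = 1 ∨ j = 2 ∨ j = 3 ∨ 4 ≤ j by omega) with rfl | rfl | rfl | hj4
        · refine ⟨1, one_pos, (IH2 1 1 (Or.inr ⟨le_refl 1, le_refl 1⟩)).mp h2, ?_, ?_⟩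
          · exact (memc (Or.inl (by simp [uval, vval]))).mp hmem
          · intro k' h1 h2; omega
        · refine ⟨1, one_pos, (IH2 2 1 (Or.inr ⟨by omega, le_refl 1⟩)).mp h2, ?_, ?_⟩
          · refine (memc (Or.inr (Or.inr ⟨?_, ?_⟩))).mp hmem
            · simp [uval]; omega
            · simp [uval, vval]; omega
          · intro k' h1 h2; omega
        · refine ⟨2, by omega, (IH2 3 2 (Or.inr ⟨by omega, by omega⟩)).mp h2, ?_, ?_⟩
          · exact (memc (Or.inl (by simp [uval, vval]))).mp hmem
          · intro k' h1' h2'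
            have hk' : k' = 1 := by omega
            subst hk'
            exact (IH1 1 1 (Or.inr ⟨le_refl 1, le_refl 1⟩)).mp (hbtw 1 (by omega) (by omega))
        · refine ⟨j - 1, by omega, (IH2 j (j-1) (Or.inr ⟨by omega, by omega⟩)).mp h2, ?_, ?_⟩
          · refine (memc (Or.inl ?_)).mp hmem
            rw [uval_eq _ _ (by omega), vval_eq _ _ (by omega : 2 ≤ j - 1), uval0, vval0]
            have hj : j - 1 + 1 = j := by omega
            rw [hj]
          · intro k' h1' h2'
            exact (IH1 1 k' (Or.inr ⟨le_refl 1, h1'⟩)).mp (hbtw 1 (by omega) (by omega))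
      · refine ⟨i' + 1, by omega, (IH2 j (i'+1) (Or.inr ⟨by omega, by omega⟩)).mp h2, ?_, ?_⟩
        · refine (memc (Or.inr (Or.inl ⟨?_, ?_⟩))).mp hmem
          · rw [uval_eq _ _ (by omega), uval_eq _ _ (by omega)]
            have := mul_gap M hij
            omega
          · rcases (show i' = 1 ∨ 2 ≤ i' by omega) with rfl | h
            · rw [vval_eq _ _ (by omega : 2 ≤ 1 + 1), vval1]
              push_cast; omega
            · rw [vval_eq _ _ (by omega), vval_eq _ _ h]
              have := mul_gap M (show i' + 1 < i' + 1 + 1 by omega)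
              omega
        · intro k' h1' h2'; omega
    · rintro ⟨j', hij', h2, hmem, hbtw⟩
      rcases hz with ⟨rfl, rfl⟩ | ⟨hi, hi'⟩
      · rcases (show j' = 1 ∨ j' = 2 ∨ 3 ≤ j' by omega) with rfl | rfl | hj3
        · refine ⟨1, one_pos, (IH2 1 1 (Or.inr ⟨le_refl 1, le_refl 1⟩)).mpr h2, ?_, ?_⟩
          · exact (memc (Or.inl (by simp [uval, vval]))).mpr hmem
          · intro k h1 h2; omega
        · refine ⟨3, by omega, (IH2 3 2 (Or.inr ⟨by omega, by omega⟩)).mpr h2, ?_, ?_⟩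
          · exact (memc (Or.inl (by simp [uval, vval]))).mpr hmem
          · intro k h1' h2'
            exact (IH1 k 1 (Or.inr ⟨by omega, le_refl 1⟩)).mpr (hbtw 1 (by omega) (by omega))
        · refine ⟨j' + 1, by omega, (IH2 (j'+1) j' (Or.inr ⟨by omega, by omega⟩)).mpr h2, ?_, ?_⟩
          · refine (memc (Or.inl ?_)).mpr hmem
            rw [uval_eq _ _ (by omega), vval_eq _ _ (by omega : 2 ≤ j'), uval0, vval0]
          · intro k h1' h2'
            exact (IH1 k 1 (Or.inr ⟨by omega, le_refl 1⟩)).mpr (hbtw 1 (by omega) (by omega))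
      · refine ⟨i + 1, by omega, (IH2 (i+1) j' (Or.inr ⟨by omega, by omega⟩)).mpr h2, ?_, ?_⟩
        · refine (memc (Or.inr (Or.inl ⟨?_, ?_⟩))).mpr hmem
          · rw [uval_eq _ _ (by omega), uval_eq _ _ (by omega)]
            have := mul_gap M (show i < i + 1 by omega)
            omega
          · rcases (show i' = 1 ∨ 2 ≤ i' by omega) with rfl | h
            · rw [vval_eq _ _ (by omega : 2 ≤ j'), vval1]
              have := mul_gap M (show 1 < j' + 1 by omega)
              have h1 : 1*(M+1) = M+1 := one_mul _
              omega
            · rw [vval_eq _ _ (by omega), vval_eq _ _ h]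
              have := mul_gap M (show i' + 1 < j' + 1 by omega)
              omega
        · intro k h1' h2'; omega
/-! ### Translation of MTL into one-register TPTL -/

def trF {P : Type} : MTL P → TPTL P Unit
  | .atom p => .atom p
  | .neg φ => .neg (trF φ)
  | .and φ ψ => .and (trF φ) (trF ψ)
  | .untl φ I ψ => .freeze () (.untl (trF φ) (.and (trF ψ) (.cstr () I)))

lemma trF_sat {P : Type} (w : DataWord P) (φ : MTL P) :
    ∀ (i : ℕ) (ν : Unit → ℕ), TPTL.sat w i ν (trF φ) ↔ MTL.sat w i φ := by
  induction φ with
  | atom p => intro i ν; simp [trF, TPTL.sat, MTL.sat]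
  | neg φ ih => intro i ν; simp [trF, TPTL.sat, MTL.sat, ih]
  | and φ ψ ih1 ih2 => intro i ν; simp [trF, TPTL.sat, MTL.sat, ih1, ih2]
  | untl φ I ψ ih1 ih2 =>
    intro i ν
    simp only [trF, TPTL.sat, MTL.sat, ih1, ih2, Function.update_self]
    exact exists_congr fun j => by tauto

/-! ### The separating TPTL formula `x. F F F (x = 0)` -/

def topF {P : Type} : TPTL P Unit := .cstr () Iv.univ

def psiF {P : Type} : TPTL P Unit :=
  .freeze () (.untl topF (.untl topF (.untl topF (.cstr () (Iv.pt 0)))))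

lemma univ_mem (d : ℤ) : Iv.univ.mem d := by
  unfold Iv.mem Iv.univ
  refine ⟨?_, ?_⟩
  · simp only [if_true]
    exact WithBot.bot_lt_coe _
  · simp only [if_true]
    exact WithBot.coe_lt_coe.mpr (WithTop.coe_lt_top d)

lemma topF_sat {P : Type} (w : DataWord P) (i : ℕ) (ν : Unit → ℕ) :
    TPTL.sat w i ν (topF (P := P)) := by
  simp only [topF, TPTL.sat]
  exact univ_mem _

lemma pt_mem (n d : ℤ) : (Iv.pt n).mem d ↔ d = n := by
  simp [Iv.mem, Iv.pt, EIntv.ofInt]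
  omega

lemma psi_models_iff {P : Type} (w : DataWord P) :
    TPTL.models w (psiF (P := P)) ↔ ∃ j, 3 ≤ j ∧ (w j).2 = (w 0).2 := by
  unfold TPTL.models psiF
  simp only [TPTL.sat, Function.update_self]
  constructor
  · rintro ⟨j1, h1, ⟨j2, h2, ⟨j3, h3, hc, -⟩, -⟩, -⟩
    rw [pt_mem] at hc
    exact ⟨j3, by omega, by omega⟩
  · rintro ⟨j, hj, he⟩
    exact ⟨1, by omega, ⟨2, by omega, ⟨j, by omega, by rw [pt_mem]; omega,
      fun k _ _ => univ_mem _⟩, fun k _ _ => univ_mem _⟩,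
      fun k _ _ => univ_mem _⟩

/-! ### Main theorem -/

/-- `TPTL¹` is strictly more expressive than MTL: every MTL formula has an
equivalent one-register TPTL formula, but some one-register TPTL formula has
no equivalent MTL formula. -/
theorem tptl1_strictly_more_expressive_than_mtl (P : Type) :
    (∀ φ : MTL P, ∃ ψ : TPTL P Unit,
        ∀ w : DataWord P, MTL.models w φ ↔ TPTL.models w ψ) ∧
    (∃ ψ : TPTL P Unit,
        ¬ ∃ φ : MTL P, ∀ w : DataWord P, MTL.models w φ ↔ TPTL.models w ψ) := by
  constructor
  · intro φ
    exact ⟨trF φ, fun w => (trF_sat w φ 0 _).symm⟩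
  · refine ⟨psiF, ?_⟩
    rintro ⟨φ, hφ⟩
    set M := φ.bound with hM
    have hu : TPTL.models (uw P (M+1)) (psiF (P := P)) := by
      rw [psi_models_iff]
      exact ⟨3, le_refl 3, by simp [uw, uval]⟩
    have huφ : MTL.models (uw P (M+1)) φ := (hφ _).mpr hu
    have hvφ : MTL.models (vw P (M+1)) φ :=
      (main_sat M φ (le_of_eq hM.symm) 0 0 (Or.inl ⟨rfl, rfl⟩)).mp huφ
    have hv : TPTL.models (vw P (M+1)) (psiF (P := P)) := (hφ _).mp hvφ
    rw [psi_models_iff] at hv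
    obtain ⟨j, hj, he⟩ := hv
    have hv0 : (vw P (M+1) 0).2 = 3*(M+1) := rfl
    have hvj : (vw P (M+1) j).2 = (j+1)*(M+1) := vval_eq _ _ (by omega)
    have := mul_gap M (show 3 < j + 1 by omega)
    omega
end

section
/- The MTL formula (¬a) U b is not definable in the unary fragment TPTL^un of TPTL, whose only temporal operators are F and X (no until). -/
/-- Syntax of the unary fragment `TPTL^un`: only the temporal operators `F`
and `X`. -/
inductive TPTLun (P V : Type) where
  | atom : P → TPTLun P V
  | cstr : V → Iv → TPTLun P V
  | neg : TPTLun P V → TPTLun P V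
  | and : TPTLun P V → TPTLun P V → TPTLun P V
  | ev : TPTLun P V → TPTLun P V
  | nxt : TPTLun P V → TPTLun P V
  | freeze : V → TPTLun P V → TPTLun P V

/-- Satisfaction for `TPTL^un`. -/
def TPTLun.sat {P V : Type} [DecidableEq V] (w : DataWord P) :
    ℕ → (V → ℕ) → TPTLun P V → Prop
  | i, _, .atom p => p ∈ (w i).1
  | i, ν, .cstr x I => I.mem (((w i).2 : ℤ) - (ν x : ℤ))
  | i, ν, .neg φ => ¬ TPTLun.sat w i ν φ
  | i, ν, .and φ ψ => TPTLun.sat w i ν φ ∧ TPTLun.sat w i ν ψ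
  | i, ν, .ev φ => ∃ j, i < j ∧ TPTLun.sat w j ν φ
  | i, ν, .nxt φ => TPTLun.sat w (i + 1) ν φ
  | i, ν, .freeze x φ => TPTLun.sat w i (Function.update ν x (w i).2) φ

/-- A data word satisfies a `TPTL^un` formula if it holds at position `0`
under the valuation mapping every register to the first data value. -/
def TPTLun.models {P V : Type} [DecidableEq V] (w : DataWord P) (φ : TPTLun P V) : Prop :=
  TPTLun.sat w 0 (fun _ => (w 0).2) φ

/-- The MTL formula `(¬a) U b`, with `a` the atom `true` and `b` the atom
`false` of `Bool`. -/
def negaUb : MTL Bool := .untl (.neg (.atom true)) Iv.univ (.atom false)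

namespace NotDef

/-- Temporal depth of a `TPTL^un` formula: nesting depth of `ev` and `nxt`. -/
def tdep {P V : Type} : TPTLun P V → ℕ
  | .atom _ => 0
  | .cstr _ _ => 0
  | .neg φ => tdep φ
  | .and φ ψ => max (tdep φ) (tdep ψ)
  | .ev φ => tdep φ + 1
  | .nxt φ => tdep φ + 1
  | .freeze _ φ => tdep φ

/-- The letter sequence `(E^g a E^g b)^ω`. -/
def su (g : ℕ) (i : ℕ) : Set Bool :=
  if i % (2*g+2) = g then {true} else if i % (2*g+2) = 2*g+1 then {false} else ∅

/-- Data word `u`, with constant data value `0`. It does not satisfy `(¬a) U b`. -/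
def uw (g : ℕ) : DataWord Bool := fun i => (su g i, 0)

/-- Data word `v`, the shift of `u` by `g+1`. It satisfies `(¬a) U b`. -/
def vw (g : ℕ) : DataWord Bool := fun j => (su g (j + g + 1), 0)

/-- The EF relation between positions of `u` and `v` with `d` rounds left. -/
def R (g d i j : ℕ) : Prop :=
  i = j + (g+1) ∨ j = i + (g+1) ∨ (i = j ∧ i + d < g)

lemma suPer (g i : ℕ) : su g (i + (2*g+2)) = su g i := by
  simp [su, Nat.add_mod_right]

lemma Rletter {g d i j : ℕ} (h : R g d i j) : su g i = su g (j + g + 1) := by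
  rcases h with h | h | ⟨h, hlt⟩
  · subst h; rfl
  · subst h
    have he : i + (g+1) + g + 1 = i + (2*g+2) := by omega
    rw [he, suPer]
  · subst h
    have h1 : i % (2*g+2) = i := Nat.mod_eq_of_lt (by omega)
    have h2 : (i + g + 1) % (2*g+2) = i + g + 1 := Nat.mod_eq_of_lt (by omega)
    simp only [su, h1, h2]
    rw [if_neg (show ¬ i = g by omega), if_neg (show ¬ i = 2*g+1 by omega),
      if_neg (show ¬ i + g + 1 = g by omega), if_neg (show ¬ i + g + 1 = 2*g+1 by omega)]

lemma Rx {g d i j : ℕ} (h : R g (d+1) i j) : R g d (i+1) (j+1) := by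
  rcases h with h | h | ⟨h, hlt⟩
  · exact Or.inl (by omega)
  · exact Or.inr (Or.inl (by omega))
  · exact Or.inr (Or.inr ⟨by omega, by omega⟩)

lemma Rf1 {g d i j : ℕ} (h : R g d i j) {i' : ℕ} (hi : i < i') (d' : ℕ) :
    ∃ j', j < j' ∧ R g d' i' j' := by
  rcases h with h | h | ⟨h, hlt⟩
  · exact ⟨i' - (g+1), by omega, Or.inl (by omega)⟩
  · exact ⟨i' + (g+1), by omega, Or.inr (Or.inl (by omega))⟩
  · exact ⟨i' + (g+1), by omega, Or.inr (Or.inl (by omega))⟩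

lemma Rf2 {g d i j : ℕ} (h : R g d i j) {j' : ℕ} (hj : j < j') (d' : ℕ) :
    ∃ i', i < i' ∧ R g d' i' j' := by
  rcases h with h | h | ⟨h, hlt⟩
  · exact ⟨j' + (g+1), by omega, Or.inl (by omega)⟩
  · exact ⟨j' - (g+1), by omega, Or.inr (Or.inl (by omega))⟩
  · exact ⟨j' + (g+1), by omega, Or.inl (by omega)⟩

/-- Transfer lemma: `R`-related positions satisfy the same formulas of small depth. -/
lemma transfer (g : ℕ) (φ : TPTLun Bool ℕ) :
    ∀ (d i j : ℕ) (ν : ℕ → ℕ), tdep φ ≤ d → R g d i j →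
      (TPTLun.sat (uw g) i ν φ ↔ TPTLun.sat (vw g) j ν φ) := by
  induction φ with
  | atom p =>
    intro d i j ν _ hR
    show p ∈ su g i ↔ p ∈ su g (j + g + 1)
    rw [Rletter hR]
  | cstr x I =>
    intro d i j ν _ hR
    show I.mem (((0:ℕ) : ℤ) - (ν x : ℤ)) ↔ I.mem (((0:ℕ) : ℤ) - (ν x : ℤ))
    exact Iff.rfl
  | neg φ ih =>
    intro d i j ν hd hR
    simp only [TPTLun.sat]
    rw [ih d i j ν hd hR]
  | and φ₁ φ₂ ih1 ih2 =>
    intro d i j ν hd hR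
    simp only [tdep] at hd
    simp only [TPTLun.sat]
    rw [ih1 d i j ν (by omega) hR, ih2 d i j ν (by omega) hR]
  | ev φ ih =>
    intro d i j ν hd hR
    simp only [tdep] at hd
    cases d with
    | zero => omega
    | succ d =>
      simp only [TPTLun.sat]
      constructor
      · rintro ⟨i', hi', hs⟩
        obtain ⟨j', hj', hR'⟩ := Rf1 hR hi' d
        exact ⟨j', hj', (ih d i' j' ν (by omega) hR').mp hs⟩
      · rintro ⟨j', hj', hs⟩
        obtain ⟨i', hi', hR'⟩ := Rf2 hR hj' d
        exact ⟨i', hi', (ih d i' j' ν (by omega) hR').mpr hs⟩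
  | nxt φ ih =>
    intro d i j ν hd hR
    simp only [tdep] at hd
    cases d with
    | zero => omega
    | succ d =>
      simp only [TPTLun.sat]
      exact ih d (i+1) (j+1) ν (by omega) (Rx hR)
  | freeze x φ ih =>
    intro d i j ν hd hR
    simp only [tdep] at hd
    show TPTLun.sat (uw g) i (Function.update ν x 0) φ ↔
      TPTLun.sat (vw g) j (Function.update ν x 0) φ
    exact ih d i j _ hd hR

lemma univ_mem (d : ℤ) : Iv.univ.mem d := by
  constructor <;> simp only [Iv.univ, EIntv.ofInt, if_pos]
  · exact WithBot.bot_lt_coe _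
  · rw [show (⊤ : WithBot (WithTop ℤ)) = ((⊤ : WithTop ℤ) : WithBot (WithTop ℤ)) from rfl]
    exact WithBot.coe_lt_coe.mpr (WithTop.coe_lt_top d)

end NotDef

/-- `(¬a) U b` is not definable in the unary fragment `TPTL^un`. -/
theorem negaUb_not_tptlun_definable :
    ¬ ∃ ψ : TPTLun Bool ℕ,
        ∀ w : DataWord Bool, TPTLun.models w ψ ↔ MTL.models w negaUb := by
  rintro ⟨ψ, hψ⟩
  set g := NotDef.tdep ψ + 1 with hg
  -- v satisfies (¬a) U b
  have hvm : MTL.models (NotDef.vw g) negaUb := by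
    simp only [MTL.models, negaUb, MTL.sat]
    refine ⟨g, by omega, ?_, NotDef.univ_mem _, ?_⟩
    · show false ∈ NotDef.su g (g + g + 1)
      have h2 : (g + g + 1) % (2*g+2) = 2*g+1 := by
        rw [show g + g + 1 = 2*g+1 by omega]
        exact Nat.mod_eq_of_lt (by omega)
      simp only [NotDef.su, h2]
      rw [if_neg (show ¬ 2*g+1 = g by omega)]
      simp
    · intro k hk0 hkg
      show ¬ true ∈ NotDef.su g (k + g + 1)
      have h2 : (k + g + 1) % (2*g+2) = k + g + 1 := Nat.mod_eq_of_lt (by omega)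
      simp only [NotDef.su, h2]
      rw [if_neg (show ¬ k + g + 1 = g by omega), if_neg (show ¬ k + g + 1 = 2*g+1 by omega)]
      simp
  -- u does not satisfy (¬a) U b
  have hum : ¬ MTL.models (NotDef.uw g) negaUb := by
    simp only [MTL.models, negaUb, MTL.sat]
    rintro ⟨j, hj, hb, -, hall⟩
    have hb' : false ∈ NotDef.su g j := hb
    by_cases h1 : j % (2*g+2) = g
    · simp [NotDef.su, h1] at hb'
    · by_cases h2 : j % (2*g+2) = 2*g+1
      · obtain ⟨t, ht⟩ : ∃ t, j = (2*g+2) * t + (2*g+1) := by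
          refine ⟨j/(2*g+2), ?_⟩
          conv_lhs => rw [← Nat.div_add_mod j (2*g+2)]
          rw [h2]
        have hmod : ((2*g+2)*t + g) % (2*g+2) = g := by
          rw [Nat.mul_add_mod]
          exact Nat.mod_eq_of_lt (by omega)
        have hc := hall ((2*g+2)*t + g) (by omega) (by omega)
        have hc' : ¬ true ∈ NotDef.su g ((2*g+2)*t + g) := fun h => hc h
        simp [NotDef.su, hmod] at hc'
      · simp [NotDef.su, h1, h2] at hb'
  -- transfer
  have hR0 : NotDef.R g (NotDef.tdep ψ) 0 0 := Or.inr (Or.inr ⟨rfl, by omega⟩)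
  have htr := NotDef.transfer g ψ (NotDef.tdep ψ) 0 0 (fun _ => 0) le_rfl hR0
  have h1 := hψ (NotDef.uw g)
  have h2 := hψ (NotDef.vw g)
  exact hum (h1.mp (htr.mpr (h2.mpr hvm)))
end
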